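/- Under the hypotheses of Chaitin's theorem (Pr r.e. and Pr(w,e) → 𝒦(w) > e), a Chaitin constant c can be computed from an r.e. index of Pr: there is a total computable function taking an index of the r.e. set {(w,e) : Pr(w,e)} to a number c such that for all e ≥ c and all w, ¬Pr(w,e). -/

import Mathlib

/-- The standard enumeration of unary partial computable functions. -/
def phi (n : ℕ) : ℕ →. ℕ :=
  Nat.Partrec.Code.eval (Denumerable.ofNat Nat.Partrec.Code n)

/-- `W n` is the domain of the `n`-th partial computable function. -/
def W (n : ℕ) : Set ℕ := {m | (phi n m).Dom}

/-- The diagonal (non-)halting set `K = {n : φ_n(n) is undefined}`. -/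
def K : Set ℕ := {n | n ∉ W n}

/-- A set is recursively enumerable iff it is `W n` for some `n`. -/
def RE (A : Set ℕ) : Prop := ∃ n, A = W n

/-- Kolmogorov–Chaitin complexity: least index `i` with `φ_i(0)↓ = m`. -/
noncomputable def KC (m : ℕ) : ℕ := sInf {i | m ∈ phi i 0}

open Nat.Partrec Nat.Partrec.Code

namespace ChaitinAux

/-- search predicate: `z = pair i c`, `n = pair p t`; check `p ∈ W i` within `t` steps and
`p.unpair.2 ≥ c`. -/
def pred (z n : ℕ) : Bool :=
  (evaln n.unpair.2 (Denumerable.ofNat Nat.Partrec.Code z.unpair.1) n.unpair.1).isSome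
    && decide (z.unpair.2 ≤ n.unpair.1.unpair.2)

theorem pred_prim : Primrec₂ pred := by
  have hu : Primrec Nat.unpair := Primrec.unpair
  have h1 : Primrec fun p : ℕ × ℕ =>
      evaln p.2.unpair.2 (Denumerable.ofNat Nat.Partrec.Code p.1.unpair.1) p.2.unpair.1 := by
    have := primrec_evaln.comp (α := ℕ × ℕ)
      (((Primrec.snd.comp (hu.comp Primrec.snd)).pair
        ((Primrec.ofNat _).comp (Primrec.fst.comp (hu.comp Primrec.fst)))).pair
        (Primrec.fst.comp (hu.comp Primrec.snd)))
    exact this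
  have h2 : Primrec fun p : ℕ × ℕ =>
      (evaln p.2.unpair.2 (Denumerable.ofNat Nat.Partrec.Code p.1.unpair.1) p.2.unpair.1).isSome :=
    Primrec.option_isSome.comp h1
  have h3 : Primrec fun p : ℕ × ℕ => decide (p.1.unpair.2 ≤ p.2.unpair.1.unpair.2) :=
    (Primrec.nat_le.comp (Primrec.snd.comp (hu.comp Primrec.fst))
      (Primrec.snd.comp (hu.comp (Primrec.fst.comp (hu.comp Primrec.snd))))).decide
  exact (Primrec.dom_bool₂ (· && ·)).comp h2 h3

/-- The search function. -/
def H1 : ℕ →. ℕ := fun z =>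
  (Nat.rfind fun n => Part.some (pred z n)).map fun n => n.unpair.1.unpair.1

theorem H1_partrec : Nat.Partrec H1 := by
  rw [← Partrec.nat_iff]
  exact (Partrec.rfind (pred_prim.to_comp.partrec₂)).map
    ((Primrec.fst.comp (Primrec.unpair.comp
      (Primrec.fst.comp (Primrec.unpair.comp Primrec.snd)))).to_comp.to₂)

theorem main : ∃ g : ℕ → ℕ, Computable g ∧
      ∀ (Pr : ℕ → ℕ → Prop) (i : ℕ),
        (∀ w e, Pr w e ↔ Nat.pair w e ∈ W i) →
        (∀ w e, Pr w e → KC w > e) →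
        ∀ e ≥ g i, ∀ w, ¬ Pr w e := by
  classical
  obtain ⟨ch, ech⟩ := exists_code.1 H1_partrec
  -- the diagonal function for the recursion theorem
  obtain ⟨cg, ecg⟩ := (exists_code (f := fun z : ℕ =>
      (eval (Denumerable.ofNat Nat.Partrec.Code z.unpair.1) z.unpair.1).bind fun b =>
        eval (Denumerable.ofNat Nat.Partrec.Code b) z.unpair.2)).1 (by
    refine Partrec.nat_iff.1 ?_
    exact (eval_part.comp
        ((Computable.ofNat _).comp (Computable.fst.comp Computable.unpair))
        (Computable.fst.comp Computable.unpair)).bind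
      ((eval_part.comp ((Computable.ofNat _).comp Computable.snd)
        ((Computable.snd.comp Computable.unpair).comp Computable.fst)).to₂))
  -- F i x : Code, the code of `y ↦ H1 (pair i (encode (curry cg x)))`
  set F : ℕ → ℕ → Nat.Partrec.Code := fun i x =>
    ch.comp (Code.const (Nat.pair i (Encodable.encode (curry cg x)))) with hF
  have hFprim : Primrec₂ F := by
    have : Primrec fun p : ℕ × ℕ =>
        Nat.pair p.1 (Encodable.encode (curry cg p.2)) :=
      Primrec₂.natPair.comp Primrec.fst
        (Primrec.encode.comp (primrec₂_curry.comp (Primrec.const cg) Primrec.snd))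
    exact primrec₂_comp.comp (Primrec.const ch) (primrec_const.comp this)
  obtain ⟨c2, ec2⟩ := (exists_code (f := fun z : ℕ =>
      Part.some (Encodable.encode (F z.unpair.1 z.unpair.2)))).1 (by
    refine Partrec.nat_iff.1 ?_
    exact Computable.partrec
      (Primrec.to_comp (Primrec.encode.comp (hFprim.comp
        (Primrec.fst.comp Primrec.unpair) (Primrec.snd.comp Primrec.unpair)))))
  refine ⟨fun i => Encodable.encode (curry cg (Encodable.encode (curry c2 i))), ?_, ?_⟩
  · exact Primrec.to_comp <| Primrec.encode.comp <| primrec₂_curry.comp (Primrec.const cg)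
      (Primrec.encode.comp (primrec₂_curry.comp (Primrec.const c2) Primrec.id))
  intro Pr i hPr hKC e he w hw
  set a : ℕ := Encodable.encode (curry c2 i) with ha
  set cstar : Nat.Partrec.Code := curry cg a with hcstar
  have hgi : Encodable.encode cstar = Encodable.encode (curry cg (Encodable.encode (curry c2 i))) := rfl
  set z : ℕ := Nat.pair i (Encodable.encode cstar) with hz
  -- key fixed-point equation
  have key : ∀ y, eval cstar y = H1 z := by
    intro y
    have h1 : eval cstar y = eval cg (Nat.pair a y) := eval_curry _ _ _
    rw [h1, ecg]
    simp only [Nat.unpair_pair]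
    have h2 : Denumerable.ofNat Nat.Partrec.Code a = curry c2 i :=
      Denumerable.ofNat_encode _
    rw [h2, eval_curry, ec2]
    simp only [Nat.unpair_pair, Part.bind_some]
    have h3 : Denumerable.ofNat Nat.Partrec.Code (Encodable.encode (F i a)) = F i a :=
      Denumerable.ofNat_encode _
    rw [h3, hF]
    simp only [show ∀ n, eval (ch.comp (Code.const n)) y = eval (Code.const n) y >>= eval ch from fun _ => rfl, eval_const, Part.bind_some]
    rw [ech]
    simp [hz, hcstar]
    exact (Part.bind_eq_bind _ _).trans (Part.bind_some _ _)
  -- the search succeeds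
  have hdom : (Nat.rfind fun n => Part.some (pred z n)).Dom := by
    apply Nat.rfind_dom.2
    have hw' : (Nat.pair w e) ∈ W i := (hPr w e).1 hw
    obtain ⟨x, hx⟩ := Part.dom_iff_mem.1 hw'
    obtain ⟨k, hk⟩ := evaln_complete.1 hx
    refine ⟨Nat.pair (Nat.pair w e) k, ?_, ?_⟩
    · simp only [Part.mem_some_iff, pred, hz, Nat.unpair_pair]
      have hks : (evaln k (Denumerable.ofNat Nat.Partrec.Code i) (Nat.pair w e)).isSome = true :=
        Option.isSome_iff_exists.2 ⟨x, hk⟩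
      have he' : Encodable.encode cstar ≤ e := he
      simp [hks, he']
    · intro m _
      exact trivial
  obtain ⟨n₀, hn₀⟩ := Part.dom_iff_mem.1 hdom
  have hpred : pred z n₀ = true := by
    have := Nat.rfind_spec hn₀
    simpa using this
  set w₀ : ℕ := n₀.unpair.1.unpair.1 with hw₀
  set e₀ : ℕ := n₀.unpair.1.unpair.2 with he₀
  simp only [pred, hz, Nat.unpair_pair, Bool.and_eq_true, decide_eq_true_eq] at hpred
  obtain ⟨hsome, hle⟩ := hpred
  -- Pr w₀ e₀ holds
  have hWmem : n₀.unpair.1 ∈ W i := by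
    obtain ⟨x, hx⟩ := Option.isSome_iff_exists.1 hsome
    exact Part.dom_iff_mem.2 ⟨x, evaln_sound hx⟩
  have hPr₀ : Pr w₀ e₀ := by
    rw [hPr]
    rwa [hw₀, he₀, Nat.pair_unpair]
  have hKC₀ : KC w₀ > e₀ := hKC _ _ hPr₀
  -- but w₀ has low complexity
  have hmem : w₀ ∈ phi (Encodable.encode cstar) 0 := by
    show w₀ ∈ eval (Denumerable.ofNat Nat.Partrec.Code (Encodable.encode cstar)) 0
    rw [Denumerable.ofNat_encode, key 0]
    exact Part.mem_map _ hn₀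
  have hKCle : KC w₀ ≤ Encodable.encode cstar := Nat.sInf_le hmem
  omega

end ChaitinAux

theorem chaitin_constant_computable :
    ∃ g : ℕ → ℕ, Computable g ∧
      ∀ (Pr : ℕ → ℕ → Prop) (i : ℕ),
        (∀ w e, Pr w e ↔ Nat.pair w e ∈ W i) →
        (∀ w e, Pr w e → KC w > e) →
        ∀ e ≥ g i, ∀ w, ¬ Pr w e := ChaitinAux.main
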